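/- For every n ≥ 1 and 0 ≤ a ≤ n, the operator ∏_{j=1}^{n−1} K_j^j on V_a^n equals q^{n−a} i_{−1} p_{−1} + q^{−a} i_0 p_0; that is, it acts by the scalar q^{n−a} on the summand V_{a−1}^{n−1} and by the scalar q^{−a} on the summand V_a^{n−1}. -/

import Mathlib

noncomputable section

open scoped TensorProduct

set_option maxHeartbeats 1000000
set_option synthInstance.maxHeartbeats 400000

/-- The ground field `𝔸 = ℚ(q)`. -/
abbrev A : Type := RatFunc ℚ

/-- The element `q ∈ 𝔸`. -/
def qq : A := RatFunc.X

/-- The set of `a`-element subsets of `{0, 1, …, n-1}` (a model for the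
`a`-element subsets of `{1, …, n}`), the basis of `V_a^n`. -/
abbrev BS (n a : ℕ) : Type := {s : Finset ℕ // s ⊆ Finset.range n ∧ s.card = a}

instance BS.fintype (n a : ℕ) : Fintype (BS n a) :=
  Fintype.subtype ((Finset.range n).powerset.filter fun s => s.card = a) (by
    intro s
    simp [Finset.mem_powerset, Finset.mem_filter])

/-- The fundamental representation `V_a^n`, as the `𝔸`-vector space with basis the
`a`-element subsets of an `n`-element set. -/
abbrev V (n a : ℕ) : Type := BS n a → A

/-- `i₋₁ : V_{a-1}^{n-1} → V_a^n` (here with indices shifted: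
`iminus n a : V_a^n → V_{a+1}^{n+1}`), the inclusion of the summand of subsets containing
the new top element `n`. -/
def iminus (n a : ℕ) : V n a →ₗ[A] V (n+1) (a+1) where
  toFun f s := if h : n ∈ s.1 then
      f ⟨s.1.erase n, by
        constructor
        · intro x hx
          have hx' := Finset.mem_erase.mp hx
          have hx2 := s.2.1 hx'.2
          simp only [Finset.mem_range] at hx2 ⊢
          omega
        · rw [Finset.card_erase_of_mem h, s.2.2]; omega⟩
    else 0
  map_add' f g := by
    funext s
    simp only [Pi.add_apply]
    by_cases h : n ∈ s.1 <;> simp [h]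
  map_smul' c f := by
    funext s
    simp only [Pi.smul_apply, smul_eq_mul, RingHom.id_apply]
    by_cases h : n ∈ s.1 <;> simp [h]

/-- `i₀ : V_a^{n-1} → V_a^n` (as `izero n a : V_a^n → V_a^{n+1}`), the inclusion of the
summand of subsets not containing the new top element. -/
def izero (n a : ℕ) : V n a →ₗ[A] V (n+1) a where
  toFun f s := if h : n ∈ s.1 then 0 else
      f ⟨s.1, by
        refine ⟨fun x hx => ?_, s.2.2⟩
        have hx2 := s.2.1 hx
        simp only [Finset.mem_range] at hx2 ⊢
        rcases Nat.lt_succ_iff_lt_or_eq.mp hx2 with h' | h'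
        · exact h'
        · exact absurd (h' ▸ hx) h⟩
  map_add' f g := by
    funext s
    simp only [Pi.add_apply]
    by_cases h : n ∈ s.1 <;> simp [h]
  map_smul' c f := by
    funext s
    simp only [Pi.smul_apply, smul_eq_mul, RingHom.id_apply]
    by_cases h : n ∈ s.1 <;> simp [h]

/-- `p₋₁ : V_a^n → V_{a-1}^{n-1}` (as `pminus n a : V_{a+1}^{n+1} → V_a^n`), the projection
onto the summand of subsets containing the top element. -/
def pminus (n a : ℕ) : V (n+1) (a+1) →ₗ[A] V n a where
  toFun f t := f ⟨insert n t.1, by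
    have hn : n ∉ t.1 := fun h => by
      have := t.2.1 h; simp [Finset.mem_range] at this
    constructor
    · intro x hx
      rcases Finset.mem_insert.mp hx with rfl | hx
      · simp
      · have := t.2.1 hx; simp only [Finset.mem_range] at this ⊢; omega
    · rw [Finset.card_insert_of_notMem hn, t.2.2]⟩
  map_add' f g := rfl
  map_smul' c f := rfl

/-- `p₀ : V_a^n → V_a^{n-1}` (as `pzero n a : V_a^{n+1} → V_a^n`), the projection onto the
summand of subsets not containing the top element. -/
def pzero (n a : ℕ) : V (n+1) a →ₗ[A] V n a where
  toFun f t := f ⟨t.1, by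
    refine ⟨fun x hx => ?_, t.2.2⟩
    have := t.2.1 hx; simp only [Finset.mem_range] at this ⊢; omega⟩
  map_add' f g := rfl
  map_smul' c f := rfl

/-- The diagonal operator on `V_a^n` acting by the scalar `x` on basis subsets containing `m`
and by `y` on those not containing `m`; for `m = n-1` this is `x • i₋₁ p₋₁ + y • i₀ p₀`. -/
def diagOp (n a m : ℕ) (x y : A) : Module.End A (V n a) where
  toFun f s := (if m ∈ s.1 then x else y) * f s
  map_add' f g := by
    funext s
    simp only [Pi.add_apply]
    ring
  map_smul' c f := by
    funext s
    simp only [Pi.smul_apply, smul_eq_mul, RingHom.id_apply]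
    ring

/-- The recursively defined action of the generator `X_i^+` on `V_a^n`
(`XpOp n a i`, where `i` is the literal subscript, `1 ≤ i ≤ n-1`). -/
def XpOp : (n a i : ℕ) → Module.End A (V n a)
  | 0, _, _ => 0
  | 1, _, _ => 0
  | _+2, 0, _ => 0
  | n+2, a+1, i =>
    if a + 1 = n + 2 then 0
    else if i = n + 1 then
      (iminus (n+1) a) ∘ₗ (izero n a) ∘ₗ (pminus n a) ∘ₗ (pzero (n+1) (a+1))
    else
      (iminus (n+1) a) ∘ₗ (XpOp (n+1) a i) ∘ₗ (pminus (n+1) a)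
      + (izero (n+1) (a+1)) ∘ₗ (XpOp (n+1) (a+1) i) ∘ₗ (pzero (n+1) (a+1))

/-- The recursively defined action of the generator `X_i^-` on `V_a^n`. -/
def XmOp : (n a i : ℕ) → Module.End A (V n a)
  | 0, _, _ => 0
  | 1, _, _ => 0
  | _+2, 0, _ => 0
  | n+2, a+1, i =>
    if a + 1 = n + 2 then 0
    else if i = n + 1 then
      (izero (n+1) (a+1)) ∘ₗ (iminus n a) ∘ₗ (pzero n a) ∘ₗ (pminus (n+1) a)
    else
      (iminus (n+1) a) ∘ₗ (XmOp (n+1) a i) ∘ₗ (pminus (n+1) a)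
      + (izero (n+1) (a+1)) ∘ₗ (XmOp (n+1) (a+1) i) ∘ₗ (pzero (n+1) (a+1))

/-- The recursively defined action of the generator `K_i` on `V_a^n`.  The middle factors
`diagOp … 1 q` and `diagOp … q⁻¹ 1` are the operators `i₋₁ p₋₁ + q i₀ p₀` and
`q⁻¹ i₋₁ p₋₁ + i₀ p₀` of the recursion. -/
def KOp : (n a i : ℕ) → Module.End A (V n a)
  | 0, _, _ => 1
  | 1, _, _ => 1
  | _+2, 0, _ => 1
  | n+2, a+1, i =>
    if a + 1 = n + 2 then 1
    else if i = n + 1 then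
      (iminus (n+1) a) ∘ₗ (diagOp (n+1) a n 1 qq) ∘ₗ (pminus (n+1) a)
      + (izero (n+1) (a+1)) ∘ₗ (diagOp (n+1) (a+1) n qq⁻¹ 1) ∘ₗ (pzero (n+1) (a+1))
    else
      (iminus (n+1) a) ∘ₗ (KOp (n+1) a i) ∘ₗ (pminus (n+1) a)
      + (izero (n+1) (a+1)) ∘ₗ (KOp (n+1) (a+1) i) ∘ₗ (pzero (n+1) (a+1))

/-- The recursively defined action of `K_i⁻¹` on `V_a^n` (the inverse of `KOp`),
given by the same recursion with `q` and `q⁻¹` interchanged. -/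
def KinvOp : (n a i : ℕ) → Module.End A (V n a)
  | 0, _, _ => 1
  | 1, _, _ => 1
  | _+2, 0, _ => 1
  | n+2, a+1, i =>
    if a + 1 = n + 2 then 1
    else if i = n + 1 then
      (iminus (n+1) a) ∘ₗ (diagOp (n+1) a n 1 qq⁻¹) ∘ₗ (pminus (n+1) a)
      + (izero (n+1) (a+1)) ∘ₗ (diagOp (n+1) (a+1) n qq 1) ∘ₗ (pzero (n+1) (a+1))
    else
      (iminus (n+1) a) ∘ₗ (KinvOp (n+1) a i) ∘ₗ (pminus (n+1) a)
      + (izero (n+1) (a+1)) ∘ₗ (KinvOp (n+1) (a+1) i) ∘ₗ (pzero (n+1) (a+1))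
/-! ### The quantum group `U_q(sl_n)` by generators and relations.

We present the algebra with `m = n - 1` generators of each kind `K i, K i⁻¹, X i⁺, X i⁻`,
indexed by `i : Fin m` (so `i` corresponds to the subscript `i + 1 ∈ {1, …, n-1}`). -/

/-- Generators of `U_q(sl_n)` (with `m = n-1`). -/
inductive UqGen (m : ℕ) : Type
  | K : Fin m → UqGen m
  | Kinv : Fin m → UqGen m
  | Xp : Fin m → UqGen m
  | Xm : Fin m → UqGen m

/-- The free `𝔸`-algebra on the generators. -/
abbrev FA (m : ℕ) : Type := FreeAlgebra A (UqGen m)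

namespace FA
variable {m : ℕ}
def K (i : Fin m) : FA m := FreeAlgebra.ι A (UqGen.K i)
def Kinv (i : Fin m) : FA m := FreeAlgebra.ι A (UqGen.Kinv i)
def Xp (i : Fin m) : FA m := FreeAlgebra.ι A (UqGen.Xp i)
def Xm (i : Fin m) : FA m := FreeAlgebra.ι A (UqGen.Xm i)
end FA

/-- The Cartan integers `(i,j)` of type `A_m`: `2` if `i = j`, `-1` if `|i-j| = 1`,
`0` if `|i-j| ≥ 2`. -/
def cart {m : ℕ} (i j : Fin m) : ℤ :=
  if i = j then 2 else if (i : ℕ) + 1 = j ∨ (j : ℕ) + 1 = i then -1 else 0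

/-- The defining relations of `U_q(sl_n)`. -/
inductive uqRel (m : ℕ) : FA m → FA m → Prop
  | KKinv (i : Fin m) : uqRel m (FA.K i * FA.Kinv i) 1
  | KinvK (i : Fin m) : uqRel m (FA.Kinv i * FA.K i) 1
  | KK (i j : Fin m) : uqRel m (FA.K i * FA.K j) (FA.K j * FA.K i)
  | KXp (i j : Fin m) : uqRel m (FA.K i * FA.Xp j) (qq ^ (cart i j) • (FA.Xp j * FA.K i))
  | KXm (i j : Fin m) : uqRel m (FA.K i * FA.Xm j) (qq ^ (-cart i j) • (FA.Xm j * FA.K i))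
  | XpXm (i j : Fin m) :
      uqRel m (FA.Xp i * FA.Xm j - FA.Xm j * FA.Xp i)
        (if i = j then (qq - qq⁻¹)⁻¹ • (FA.K i - FA.Kinv i) else 0)
  | XpXp (i j : Fin m) (h : (i : ℕ) + 2 ≤ j ∨ (j : ℕ) + 2 ≤ i) :
      uqRel m (FA.Xp i * FA.Xp j) (FA.Xp j * FA.Xp i)
  | XmXm (i j : Fin m) (h : (i : ℕ) + 2 ≤ j ∨ (j : ℕ) + 2 ≤ i) :
      uqRel m (FA.Xm i * FA.Xm j) (FA.Xm j * FA.Xm i)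
  | serreP (i j : Fin m) (h : (i : ℕ) + 1 = j ∨ (j : ℕ) + 1 = i) :
      uqRel m (FA.Xp i ^ 2 * FA.Xp j - (qq + qq⁻¹) • (FA.Xp i * FA.Xp j * FA.Xp i)
        + FA.Xp j * FA.Xp i ^ 2) 0
  | serreM (i j : Fin m) (h : (i : ℕ) + 1 = j ∨ (j : ℕ) + 1 = i) :
      uqRel m (FA.Xm i ^ 2 * FA.Xm j - (qq + qq⁻¹) • (FA.Xm i * FA.Xm j * FA.Xm i)
        + FA.Xm j * FA.Xm i ^ 2) 0

/-- The quantum group `U_q(sl_{m+1})`, presented by generators and relations.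
For `U_q(sl_n)` take `m = n - 1`. -/
abbrev Uq (m : ℕ) : Type := RingQuot (uqRel m)

namespace Uq
variable {m : ℕ}
/-- The generator `K_{i+1}` of `U_q(sl_n)`. -/
def K (i : Fin m) : Uq m := RingQuot.mkAlgHom A (uqRel m) (FA.K i)
/-- The generator `K_{i+1}⁻¹` of `U_q(sl_n)`. -/
def Kinv (i : Fin m) : Uq m := RingQuot.mkAlgHom A (uqRel m) (FA.Kinv i)
/-- The generator `X_{i+1}^+` of `U_q(sl_n)`. -/
def Xp (i : Fin m) : Uq m := RingQuot.mkAlgHom A (uqRel m) (FA.Xp i)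
/-- The generator `X_{i+1}^-` of `U_q(sl_n)`. -/
def Xm (i : Fin m) : Uq m := RingQuot.mkAlgHom A (uqRel m) (FA.Xm i)
end Uq
/-! ### The duality maps `d_{a,n}`, triple invariants, and the pivotal elements `τ`. -/

/-- The sum-of-coefficients functional on `V_a^n`. -/
def sumF (n a : ℕ) : V n a →ₗ[A] A where
  toFun f := ∑ s : BS n a, f s
  map_add' f g := by simp [Finset.sum_add_distrib]
  map_smul' c f := by simp [Finset.mul_sum]

/-- The "trivial" map `V_a^n → (V_c^n)^*`; when `V_a^n` and `V_c^n` are one-dimensional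
(`a = 0` or `a = n`, and correspondingly for `c`) it sends the basis vector to the dual
basis vector.  Used for the base cases of `d_{a,n}`. -/
def dtriv (n a c : ℕ) : V n a →ₗ[A] Module.Dual A (V n c) :=
  LinearMap.smulRight (sumF n a) (sumF n c)

/-- The map `d_{a,n} : V_a^n → (V_{n-a}^n)^*`, defined recursively by
`d_{a,n} = i₀ ∘ d_{a-1,n-1} ∘ p₋₁ + (-q)^{-a} i₋₁ ∘ d_{a,n-1} ∘ p₀`, with both base cases
sending the basis vector to the dual basis vector.  Here `dmap n a c` has target
`(V_c^n)^*`, to be used with `c = n - a`. -/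
def dmap : (n a c : ℕ) → (V n a →ₗ[A] Module.Dual A (V n c))
  | 0, a, c => dtriv 0 a c
  | n+1, 0, c => dtriv (n+1) 0 c
  | n+1, a+1, c =>
    if a + 1 = n + 1 then dtriv (n+1) (a+1) c
    else
      match c with
      | 0 => 0
      | c+1 =>
        (pzero n (c+1)).dualMap ∘ₗ (dmap n a (c+1)) ∘ₗ (pminus n a)
        + ((-qq) ^ (a+1))⁻¹ •
            ((pminus n c).dualMap ∘ₗ (dmap n (a+1) c) ∘ₗ (pzero n (a+1)))

section voutvin

open TensorProduct

/-- First term of the recursion for `v_out`: `(-1)^c q^{b+c} (i₋₁ ⊗ i₀ ⊗ i₀)`. -/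
def vterm1 (n a b c : ℕ) (v : V n a ⊗[A] (V n b ⊗[A] V n c)) :
    V (n+1) (a+1) ⊗[A] (V (n+1) b ⊗[A] V (n+1) c) :=
  ((-1 : A)^c * qq^(b+c)) •
    (TensorProduct.map (iminus n a) (TensorProduct.map (izero n b) (izero n c)) v)

/-- Second term of the recursion for `v_out`: `(-1)^a q^c (i₀ ⊗ i₋₁ ⊗ i₀)`. -/
def vterm2 (n a b c : ℕ) (v : V n a ⊗[A] (V n b ⊗[A] V n c)) :
    V (n+1) a ⊗[A] (V (n+1) (b+1) ⊗[A] V (n+1) c) :=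
  ((-1 : A)^a * qq^c) •
    (TensorProduct.map (izero n a) (TensorProduct.map (iminus n b) (izero n c)) v)

/-- Third term of the recursion for `v_out`: `(-1)^b (i₀ ⊗ i₀ ⊗ i₋₁)`. -/
def vterm3 (n a b c : ℕ) (v : V n a ⊗[A] (V n b ⊗[A] V n c)) :
    V (n+1) a ⊗[A] (V (n+1) b ⊗[A] V (n+1) (c+1)) :=
  ((-1 : A)^b) •
    (TensorProduct.map (izero n a) (TensorProduct.map (izero n b) (iminus n c)) v)

/-- The triple invariant `v_out^n_{a,b,c} ∈ V_a^n ⊗ V_b^n ⊗ V_c^n` (intended for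
`a + b + c = n`), defined by the recursion of Definition `defn:trivalent-vertices`,
omitting any term with a negative subscript. -/
def voutE : (n a b c : ℕ) → V n a ⊗[A] (V n b ⊗[A] V n c)
  | 0, _, _, _ => (fun _ => (1:A)) ⊗ₜ[A] ((fun _ => (1:A)) ⊗ₜ[A] (fun _ => (1:A)))
  | n+1, 0, 0, 0 => 0
  | n+1, a+1, 0, 0 => vterm1 n a 0 0 (voutE n a 0 0)
  | n+1, 0, b+1, 0 => vterm2 n 0 b 0 (voutE n 0 b 0)
  | n+1, 0, 0, c+1 => vterm3 n 0 0 c (voutE n 0 0 c)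
  | n+1, a+1, b+1, 0 =>
      vterm1 n a (b+1) 0 (voutE n a (b+1) 0) + vterm2 n (a+1) b 0 (voutE n (a+1) b 0)
  | n+1, a+1, 0, c+1 =>
      vterm1 n a 0 (c+1) (voutE n a 0 (c+1)) + vterm3 n (a+1) 0 c (voutE n (a+1) 0 c)
  | n+1, 0, b+1, c+1 =>
      vterm2 n 0 b (c+1) (voutE n 0 b (c+1)) + vterm3 n 0 (b+1) c (voutE n 0 (b+1) c)
  | n+1, a+1, b+1, c+1 =>
      vterm1 n a (b+1) (c+1) (voutE n a (b+1) (c+1))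
      + vterm2 n (a+1) b (c+1) (voutE n (a+1) b (c+1))
      + vterm3 n (a+1) (b+1) c (voutE n (a+1) (b+1) c)

/-- First term of the recursion for `v_in`: `(-1)^c (…) ∘ (p₋₁ ⊗ p₀ ⊗ p₀)`. -/
def wterm1 (n a b c : ℕ) (φ : V n a ⊗[A] (V n b ⊗[A] V n c) →ₗ[A] A) :
    V (n+1) (a+1) ⊗[A] (V (n+1) b ⊗[A] V (n+1) c) →ₗ[A] A :=
  ((-1 : A)^c) •
    (φ ∘ₗ TensorProduct.map (pminus n a) (TensorProduct.map (pzero n b) (pzero n c)))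

/-- Second term of the recursion for `v_in`: `(-1)^a q^{-a} (…) ∘ (p₀ ⊗ p₋₁ ⊗ p₀)`. -/
def wterm2 (n a b c : ℕ) (φ : V n a ⊗[A] (V n b ⊗[A] V n c) →ₗ[A] A) :
    V (n+1) a ⊗[A] (V (n+1) (b+1) ⊗[A] V (n+1) c) →ₗ[A] A :=
  ((-1 : A)^a * (qq^a)⁻¹) •
    (φ ∘ₗ TensorProduct.map (pzero n a) (TensorProduct.map (pminus n b) (pzero n c)))

/-- Third term of the recursion for `v_in`: `(-1)^b q^{-a-b} (…) ∘ (p₀ ⊗ p₀ ⊗ p₋₁)`. -/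
def wterm3 (n a b c : ℕ) (φ : V n a ⊗[A] (V n b ⊗[A] V n c) →ₗ[A] A) :
    V (n+1) a ⊗[A] (V (n+1) b ⊗[A] V (n+1) (c+1)) →ₗ[A] A :=
  ((-1 : A)^b * (qq^(a+b))⁻¹) •
    (φ ∘ₗ TensorProduct.map (pzero n a) (TensorProduct.map (pzero n b) (pminus n c)))

/-- The triple coinvariant `v_in^n_{a,b,c} : V_a^n ⊗ V_b^n ⊗ V_c^n → 𝔸` (intended for
`a + b + c = n`), defined recursively, omitting any term with a negative subscript. -/
def vinE : (n a b c : ℕ) → (V n a ⊗[A] (V n b ⊗[A] V n c) →ₗ[A] A)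
  | 0, a, b, c =>
      (LinearMap.mul' A A) ∘ₗ
        TensorProduct.map (sumF 0 a)
          ((LinearMap.mul' A A) ∘ₗ TensorProduct.map (sumF 0 b) (sumF 0 c))
  | n+1, 0, 0, 0 => 0
  | n+1, a+1, 0, 0 => wterm1 n a 0 0 (vinE n a 0 0)
  | n+1, 0, b+1, 0 => wterm2 n 0 b 0 (vinE n 0 b 0)
  | n+1, 0, 0, c+1 => wterm3 n 0 0 c (vinE n 0 0 c)
  | n+1, a+1, b+1, 0 =>
      wterm1 n a (b+1) 0 (vinE n a (b+1) 0) + wterm2 n (a+1) b 0 (vinE n (a+1) b 0)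
  | n+1, a+1, 0, c+1 =>
      wterm1 n a 0 (c+1) (vinE n a 0 (c+1)) + wterm3 n (a+1) 0 c (vinE n (a+1) 0 c)
  | n+1, 0, b+1, c+1 =>
      wterm2 n 0 b (c+1) (vinE n 0 b (c+1)) + wterm3 n 0 (b+1) c (vinE n 0 (b+1) c)
  | n+1, a+1, b+1, c+1 =>
      wterm1 n a (b+1) (c+1) (vinE n a (b+1) (c+1))
      + wterm2 n (a+1) b (c+1) (vinE n (a+1) b (c+1))
      + wterm3 n (a+1) (b+1) c (vinE n (a+1) (b+1) c)

end voutvin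

/-- The operator `∏_{j=1}^{n-1} K_j^j` on `V_a^n`. -/
def kjOp (n a : ℕ) : Module.End A (V n a) :=
  (List.ofFn fun i : Fin (n-1) => (KOp n a ((i : ℕ)+1)) ^ ((i : ℕ)+1)).prod

/-- The pivotal operator `τ_n = ∏_{j=1}^{n-1} K_j^{j(n-j)}` on `V_a^n`. -/
def tauOp (n a : ℕ) : Module.End A (V n a) :=
  (List.ofFn fun i : Fin (n-1) => (KOp n a ((i : ℕ)+1)) ^ (((i : ℕ)+1) * (n - ((i : ℕ)+1)))).prod

/-- The inverse pivotal operator `τ_n⁻¹ = ∏_{j=1}^{n-1} K_j^{-j(n-j)}` on `V_a^n`. -/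
def tauinvOp (n a : ℕ) : Module.End A (V n a) :=
  (List.ofFn fun i : Fin (n-1) => (KinvOp n a ((i : ℕ)+1)) ^ (((i : ℕ)+1) * (n - ((i : ℕ)+1)))).prod

/-- The element `τ_n = ∏_{j=1}^{n-1} K_j^{j(n-j)} ∈ U_q(sl_n)`. -/
def tauU (n : ℕ) : Uq (n-1) :=
  (List.ofFn fun i : Fin (n-1) => (Uq.K i) ^ (((i : ℕ)+1) * (n - ((i : ℕ)+1)))).prod

/-- The Cartan integers for literal subscripts `i, j ∈ {1, …, n-1}`. -/
def cartN (i j : ℕ) : ℤ :=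
  if i = j then 2 else if i + 1 = j ∨ j + 1 = i then -1 else 0


section aux

lemma qq_ne_zero : qq ≠ 0 := RatFunc.X_ne_zero

/-- exponent of `q` by which `K_i` acts on a basis subset `s` (for subscript `i ≥ 1`). -/
def exF (i : ℕ) (s : Finset ℕ) : ℤ :=
  (if i ∈ s then 1 else 0) - (if i - 1 ∈ s then 1 else 0)

/-- diagonal operator with eigenvalue `q ^ (g s)` on the basis vector `s`. -/
def dOpZ (n a : ℕ) (g : Finset ℕ → ℤ) : Module.End A (V n a) where
  toFun f s := qq ^ g s.1 * f s
  map_add' f g := by funext s; simp only [Pi.add_apply]; ring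
  map_smul' c f := by
    funext s; simp only [Pi.smul_apply, smul_eq_mul, RingHom.id_apply]; ring

lemma dOpZ_apply (n a : ℕ) (g : Finset ℕ → ℤ) (f : V n a) (s : BS n a) :
    dOpZ n a g f s = qq ^ g s.1 * f s := rfl

lemma dOpZ_mul (n a : ℕ) (g h : Finset ℕ → ℤ) :
    dOpZ n a g * dOpZ n a h = dOpZ n a (g + h) := by
  refine LinearMap.ext fun f => funext fun s => ?_
  simp only [Module.End.mul_apply, dOpZ_apply, Pi.add_apply,
    zpow_add₀ qq_ne_zero]
  ring

lemma dOpZ_pow (n a : ℕ) (g : Finset ℕ → ℤ) (k : ℕ) :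
    dOpZ n a g ^ k = dOpZ n a (fun s => k * g s) := by
  induction k with
  | zero =>
    refine LinearMap.ext fun f => funext fun s => ?_
    simp [dOpZ_apply]
  | succ m ih =>
    rw [pow_succ, ih, dOpZ_mul]
    refine congrArg _ (funext fun s => ?_)
    simp only [Pi.add_apply]; push_cast; ring

lemma dOpZ_prod (n a : ℕ) (m : ℕ) (g : Fin m → Finset ℕ → ℤ) :
    (List.ofFn fun i => dOpZ n a (g i)).prod = dOpZ n a (fun s => ∑ i, g i s) := by
  induction m with
  | zero =>
    refine LinearMap.ext fun f => funext fun s => ?_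
    simp [dOpZ_apply]
  | succ m ih =>
    rw [List.ofFn_succ, List.prod_cons, ih (fun i => g i.succ), dOpZ_mul]
    refine congrArg _ (funext fun s => ?_)
    simp [Fin.sum_univ_succ]

lemma KOp_apply : ∀ (n a i : ℕ), 1 ≤ i → i + 1 ≤ n → a ≤ n →
    ∀ (f : V n a) (s : BS n a), KOp n a i f s = qq ^ exF i s.1 * f s := by
  intro n
  induction n with
  | zero => intro a i h1 h2; omega
  | succ m ih =>
    match m with
    | 0 => intro a i h1 h2; omega
    | Nat.succ k =>
      intro a i h1 h2 h3 f s
      match a with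
      | 0 =>
        have hs : s.1 = ∅ := Finset.card_eq_zero.mp s.2.2
        simp [KOp, exF, hs, Module.End.one_apply]
      | Nat.succ b =>
        by_cases hEq : b + 1 = k + 2
        · -- a = n, full set
          have hs : s.1 = Finset.range (k+2) := by
            apply Finset.eq_of_subset_of_card_le s.2.1
            rw [s.2.2, Finset.card_range]; omega
          have h1' : i ∈ s.1 := by rw [hs]; simp [Finset.mem_range]; omega
          have h2' : i - 1 ∈ s.1 := by rw [hs]; simp [Finset.mem_range]; omega
          simp only [KOp]
          rw [if_pos hEq]
          simp [exF, h1', h2', Module.End.one_apply]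
        · by_cases hi : i = k + 1
          · subst hi
            simp only [KOp]
            rw [if_neg hEq, if_true]
            simp only [LinearMap.add_apply, LinearMap.comp_apply, Pi.add_apply]
            by_cases hk : k + 1 ∈ s.1
            · have hz : (izero (k+1) (b+1)) ((diagOp (k+1) (b+1) k qq⁻¹ 1)
                  ((pzero (k+1) (b+1)) f)) s = 0 := by
                simp [izero, hk]
              rw [hz, add_zero]
              simp only [iminus, LinearMap.coe_mk, AddHom.coe_mk, dif_pos hk]
              simp only [diagOp, pminus, LinearMap.coe_mk, AddHom.coe_mk]
              have hmem : k ∈ (s.1.erase (k+1)) ↔ k ∈ s.1 := by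
                simp [Finset.mem_erase]
              have heq : (⟨insert (k+1) (s.1.erase (k+1)), by
                  constructor
                  · intro x hx
                    rcases Finset.mem_insert.mp hx with rfl | hx
                    · exact s.2.1 hk
                    · exact s.2.1 (Finset.mem_erase.mp hx).2
                  · rw [Finset.insert_erase hk]; exact s.2.2⟩ : BS (k+2) (b+1)) = s := by
                exact Subtype.ext (Finset.insert_erase hk)
              rw [heq]
              by_cases hkk : k ∈ s.1
              · rw [if_pos (hmem.mpr hkk)]
                simp [exF, hk, hkk]
              · rw [if_neg (fun h => hkk (hmem.mp h))]
                simp [exF, hk, hkk]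
            · have hz : (iminus (k+1) b) ((diagOp (k+1) b k 1 qq)
                  ((pminus (k+1) b) f)) s = 0 := by
                simp [iminus, hk]
              rw [hz, zero_add]
              simp only [izero, LinearMap.coe_mk, AddHom.coe_mk, dif_neg hk]
              simp only [diagOp, pzero, LinearMap.coe_mk, AddHom.coe_mk]
              by_cases hkk : k ∈ s.1
              · rw [if_pos hkk]
                simp [exF, hk, hkk]
              · rw [if_neg hkk]
                simp [exF, hk, hkk]
          · have hi' : i + 1 ≤ k + 1 := by omega
            simp only [KOp]
            rw [if_neg hEq, if_neg hi]
            simp only [LinearMap.add_apply, LinearMap.comp_apply, Pi.add_apply]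
            by_cases hk : k + 1 ∈ s.1
            · have hz : (izero (k+1) (b+1)) ((KOp (k+1) (b+1) i)
                  ((pzero (k+1) (b+1)) f)) s = 0 := by
                simp [izero, hk]
              rw [hz, add_zero]
              simp only [iminus, LinearMap.coe_mk, AddHom.coe_mk, dif_pos hk]
              rw [ih b i h1 hi' (by omega)]
              simp only [pminus, LinearMap.coe_mk, AddHom.coe_mk]
              have heq : (⟨insert (k+1) (s.1.erase (k+1)), by
                  constructor
                  · intro x hx
                    rcases Finset.mem_insert.mp hx with rfl | hx
                    · exact s.2.1 hk
                    · exact s.2.1 (Finset.mem_erase.mp hx).2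
                  · rw [Finset.insert_erase hk]; exact s.2.2⟩ : BS (k+2) (b+1)) = s :=
                Subtype.ext (Finset.insert_erase hk)
              rw [heq]
              have hex : exF i (s.1.erase (k+1)) = exF i s.1 := by
                unfold exF
                have e1 : i ∈ s.1.erase (k+1) ↔ i ∈ s.1 := by
                  simp [Finset.mem_erase]; omega
                have e2 : i - 1 ∈ s.1.erase (k+1) ↔ i - 1 ∈ s.1 := by
                  simp [Finset.mem_erase]; omega
                simp only [e1, e2]
              rw [hex]
            · have hz : (iminus (k+1) b) ((KOp (k+1) b i)
                  ((pminus (k+1) b) f)) s = 0 := by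
                simp [iminus, hk]
              rw [hz, zero_add]
              simp only [izero, LinearMap.coe_mk, AddHom.coe_mk, dif_neg hk]
              rw [ih (b+1) i h1 hi' (by omega)]
              rfl

lemma KOp_eq_dOpZ (n a i : ℕ) (h1 : 1 ≤ i) (h2 : i + 1 ≤ n) (h3 : a ≤ n) :
    KOp n a i = dOpZ n a (exF i) :=
  LinearMap.ext fun f => funext fun s => KOp_apply n a i h1 h2 h3 f s

lemma telescope (χ : ℕ → ℤ) (m : ℕ) :
    ∑ j ∈ Finset.range m, ((j:ℤ)+1) * (χ (j+1) - χ j)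
      = m * χ m - ∑ j ∈ Finset.range m, χ j := by
  induction m with
  | zero => simp
  | succ k ih =>
    rw [Finset.sum_range_succ, ih, Finset.sum_range_succ (f := χ)]
    push_cast; ring

lemma sumEx (n a : ℕ) (hn : 1 ≤ n) (s : Finset ℕ) (hs : s ⊆ Finset.range n)
    (hc : s.card = a) :
    ∑ i : Fin (n-1), ((i:ℕ)+1 : ℤ) * exF ((i:ℕ)+1) s
      = if n-1 ∈ s then (n:ℤ) - a else -(a:ℤ) := by
  set χ : ℕ → ℤ := fun j => if j ∈ s then 1 else 0 with hχ
  have key : ∑ i : Fin (n-1), ((i:ℕ)+1 : ℤ) * exF ((i:ℕ)+1) s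
      = ∑ j ∈ Finset.range (n-1), ((j:ℤ)+1) * (χ (j+1) - χ j) := by
    rw [Fin.sum_univ_eq_sum_range (fun j => ((j:ℤ)+1) * exF (j+1) s)]
    refine Finset.sum_congr rfl fun j _ => ?_
    simp [exF, hχ]
  rw [key, telescope]
  have hsum : ∑ j ∈ Finset.range (n-1), χ j = ((s.erase (n-1)).card : ℤ) := by
    rw [hχ]
    rw [Finset.sum_ite_mem]
    have : Finset.range (n-1) ∩ s = s.erase (n-1) := by
      ext x
      simp only [Finset.mem_inter, Finset.mem_range, Finset.mem_erase]
      constructor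
      · rintro ⟨hx1, hx2⟩; exact ⟨by omega, hx2⟩
      · rintro ⟨hx1, hx2⟩
        have := Finset.mem_range.mp (hs hx2)
        exact ⟨by omega, hx2⟩
    rw [this]
    simp
  rw [hsum]
  by_cases hm : n - 1 ∈ s
  · have ha1 : 1 ≤ a := by rw [← hc]; exact Finset.card_pos.mpr ⟨_, hm⟩
    rw [if_pos hm, hχ]
    simp only [if_pos hm]
    rw [Finset.card_erase_of_mem hm, hc]
    push_cast [ha1, hn]
    ring
  · rw [if_neg hm, hχ]
    simp only [if_neg hm]
    rw [Finset.erase_eq_of_notMem hm, hc]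
    ring

end aux

/-- for every `n ≥ 1` and `0 ≤ a ≤ n`, the operator `∏_{j=1}^{n-1} K_j^j` on
`V_a^n` equals `q^{n-a} i₋₁ p₋₁ + q^{-a} i₀ p₀`, i.e. it acts by the scalar `q^{n-a}` on
the summand `V_{a-1}^{n-1}` (basis subsets containing the top element) and by `q^{-a}` on
the summand `V_a^{n-1}`. -/
theorem statement9 (n : ℕ) (hn : 1 ≤ n) (a : ℕ) (ha : a ≤ n) :
    kjOp n a = diagOp n a (n-1) (qq ^ ((n : ℤ) - (a : ℤ))) (qq ^ (-(a : ℤ))) ∧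
    ∀ (f : V n a) (s : BS n a),
      kjOp n a f s
        = (if n-1 ∈ s.1 then qq ^ ((n : ℤ) - (a : ℤ)) else qq ^ (-(a : ℤ))) * f s := by
  have hop : kjOp n a
      = dOpZ n a (fun s => ∑ i : Fin (n-1), ((((i:ℕ)+1 : ℕ)) : ℤ) * exF ((i:ℕ)+1) s) := by
    unfold kjOp
    have hl : (List.ofFn fun i : Fin (n-1) => (KOp n a ((i:ℕ)+1)) ^ ((i:ℕ)+1))
        = List.ofFn fun i : Fin (n-1) =>
            dOpZ n a (fun s => ((((i:ℕ)+1 : ℕ)) : ℤ) * exF ((i:ℕ)+1) s) := by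
      refine congrArg _ (funext fun i => ?_)
      rw [KOp_eq_dOpZ n a ((i:ℕ)+1) (by omega) (by have := i.isLt; omega) ha,
        dOpZ_pow]
    rw [hl, dOpZ_prod]
  have hdiag : dOpZ n a (fun s => ∑ i : Fin (n-1), ((((i:ℕ)+1 : ℕ)) : ℤ) * exF ((i:ℕ)+1) s)
      = diagOp n a (n-1) (qq ^ ((n : ℤ) - (a : ℤ))) (qq ^ (-(a : ℤ))) := by
    refine LinearMap.ext fun f => funext fun s => ?_
    rw [dOpZ_apply]
    have hsum : ∑ i : Fin (n-1), ((((i:ℕ)+1 : ℕ)) : ℤ) * exF ((i:ℕ)+1) s.1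
        = if n-1 ∈ s.1 then (n:ℤ) - a else -(a:ℤ) := by
      rw [← sumEx n a hn s.1 s.2.1 s.2.2]
      push_cast
      rfl
    have hd : diagOp n a (n-1) (qq ^ ((n : ℤ) - (a : ℤ))) (qq ^ (-(a : ℤ))) f s
        = (if n-1 ∈ s.1 then qq ^ ((n : ℤ) - (a : ℤ)) else qq ^ (-(a : ℤ))) * f s := rfl
    rw [hd, hsum]
    by_cases h : n-1 ∈ s.1 <;> simp [h]
  refine ⟨hop.trans hdiag, fun f s => ?_⟩
  rw [hop.trans hdiag]
  rfl

end
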